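/- Let ψ = a₀|0⟩ + a₁|1⟩ + a₂|2⟩ and φ = b₀|0⟩ + b₁|1⟩ + b₂|2⟩ be unit vectors in R³ with a₁ ≠ 0, b₁ > 0, a₁ > 0. If ψ†M_kψ = φ†M_kφ for k ∈ {1,2,3,5,6,7} (Gell-Mann matrices excluding M₄ and M₈), then φ = ψ. -/
import Mathlib


open Matrix Complex

/-- The Gell-Mann matrices `M₁, M₂, M₃, M₅, M₆, M₇`. -/
noncomputable def gm1 : Matrix (Fin 3) (Fin 3) ℂ := !![0, 1, 0; 1, 0, 0; 0, 0, 0]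
noncomputable def gm2 : Matrix (Fin 3) (Fin 3) ℂ := !![0, -I, 0; I, 0, 0; 0, 0, 0]
noncomputable def gm3 : Matrix (Fin 3) (Fin 3) ℂ := !![1, 0, 0; 0, -1, 0; 0, 0, 0]
noncomputable def gm5 : Matrix (Fin 3) (Fin 3) ℂ := !![0, 0, -I; 0, 0, 0; I, 0, 0]
noncomputable def gm6 : Matrix (Fin 3) (Fin 3) ℂ := !![0, 0, 0; 0, 0, 1; 0, 1, 0]
noncomputable def gm7 : Matrix (Fin 3) (Fin 3) ℂ := !![0, 0, 0; 0, 0, -I; 0, I, 0]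

/-- Expectation value `⟨ψ|M|ψ⟩` of an observable `M` in a qutrit state with real
coordinates `ψ : Fin 3 → ℝ`. -/
noncomputable def expval (M : Matrix (Fin 3) (Fin 3) ℂ) (ψ : Fin 3 → ℝ) : ℂ :=
  star (fun i => (ψ i : ℂ)) ⬝ᵥ M.mulVec (fun i => (ψ i : ℂ))

/-- A real qutrit state `ψ = a₀|0⟩ + a₁|1⟩ + a₂|2⟩` with `a₁ > 0` is uniquely determined
among real unit vectors `φ` with `b₁ > 0` by the expectation values of the Gell-Mann
matrices `M₁, M₂, M₃, M₅, M₆, M₇` (framework `𝐀₆`, without `M₄` and `M₈`). -/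
theorem qutrit_udp_A6 (a₀ a₁ a₂ b₀ b₁ b₂ : ℝ)
    (ha : a₀ ^ 2 + a₁ ^ 2 + a₂ ^ 2 = 1) (hb : b₀ ^ 2 + b₁ ^ 2 + b₂ ^ 2 = 1)
    (ha₁ : 0 < a₁) (hb₁ : 0 < b₁)
    (h : ∀ M ∈ [gm1, gm2, gm3, gm5, gm6, gm7],
      expval M ![a₀, a₁, a₂] = expval M ![b₀, b₁, b₂]) :
    b₀ = a₀ ∧ b₁ = a₁ ∧ b₂ = a₂ := by
  have e1 := h gm1 (by simp)
  have e3 := h gm3 (by simp)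
  have e6 := h gm6 (by simp)
  simp only [expval, gm1, gm3, gm6, dotProduct, mulVec, Fin.sum_univ_three,
    Matrix.of_apply, Matrix.cons_val_zero, Matrix.cons_val_one, Matrix.head_cons,
    Matrix.cons_val_two, Matrix.tail_cons, Pi.star_apply, RCLike.star_def,
    Complex.conj_ofReal] at e1 e3 e6
  have e1' : a₀ * a₁ = b₀ * b₁ := by
    have : ((a₀ * a₁ : ℝ) : ℂ) = ((b₀ * b₁ : ℝ) : ℂ) := by
      push_cast; linear_combination (1/2 : ℂ) * e1
    exact_mod_cast this
  have e3' : a₀ ^ 2 - a₁ ^ 2 = b₀ ^ 2 - b₁ ^ 2 := by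
    have : ((a₀ ^ 2 - a₁ ^ 2 : ℝ) : ℂ) = ((b₀ ^ 2 - b₁ ^ 2 : ℝ) : ℂ) := by
      push_cast; linear_combination e3
    exact_mod_cast this
  have e6' : a₁ * a₂ = b₁ * b₂ := by
    have : ((a₁ * a₂ : ℝ) : ℂ) = ((b₁ * b₂ : ℝ) : ℂ) := by
      push_cast; linear_combination (1/2 : ℂ) * e6
    exact_mod_cast this
  have key : (b₁ ^ 2 - a₁ ^ 2) * (b₁ ^ 2 + a₀ ^ 2) = 0 := by linear_combination b₁ ^ 2 * e3' - (a₀ * a₁ + b₀ * b₁) * e1'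
  have hb2 : b₁ ^ 2 = a₁ ^ 2 := by
    rcases mul_eq_zero.mp key with h' | h'
    · linarith
    · nlinarith
  have hba : b₁ = a₁ := by nlinarith
  refine ⟨?_, hba, ?_⟩
  · have := e1'; rw [hba] at this; nlinarith
  · have := e6'; rw [hba] at this; nlinarith
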